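/- arXiv:1302.2101 — 2 statements merged into one kernel-verified Lean document; each statement's English description precedes it below -/
import Mathlib

section
/- Let A be a (possibly noncommutative) ring that is an algebra over ℚ, and let K, S, K', T ∈ A satisfy S*T = -(1/4)•1 + K*K, T*S = -(1/4)•1 + K'*K', K*S = S*K', and T*K = K'*T. Assume S, K − (1/2)•1, and K' − (1/2)•1 are invertible in A. Then the four elements (K' − (1/2)•1)⁻¹ * T, S⁻¹ * (K + (1/2)•1), T * (K − (1/2)•1)⁻¹, and (K' + (1/2)•1) * S⁻¹ are all equal. (This common element is the exterior Dirichlet-to-Neumann map Λ₊.) -/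
theorem exterior_DtN_aux (A : Type*) [Ring A] (K S K' T c : A)
    (h1' : S * T = (K - c) * (K + c))
    (h1'' : S * T = (K + c) * (K - c))
    (h2'' : T * S = (K' + c) * (K' - c))
    (h3' : (K - c) * S = S * (K' - c))
    [Invertible S] [Invertible (K - c)] [Invertible (K' - c)] :
    ⅟(K' - c) * T = ⅟S * (K + c) ∧
    ⅟S * (K + c) = T * ⅟(K - c) ∧
    T * ⅟(K - c) = (K' + c) * ⅟S := by
  have hswap : S * ⅟(K' - c) = ⅟(K - c) * S := by
    have h := congrArg (fun x => ⅟(K - c) * x * ⅟(K' - c)) h3'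
    simpa [mul_assoc] using h
  have hswap2 : (K' - c) * ⅟S = ⅟S * (K - c) := by
    have h := congrArg (fun x => ⅟S * x * ⅟S) h3'
    simpa [mul_assoc] using h.symm
  refine ⟨?_, ?_, ?_⟩
  · have e : ⅟(K - c) * (S * T) = K + c := by
      rw [h1', ← mul_assoc, invOf_mul_self, one_mul]
    calc ⅟(K' - c) * T = ⅟S * S * ⅟(K' - c) * T := by rw [invOf_mul_self, one_mul]
      _ = ⅟S * (⅟(K - c) * S) * T := by rw [mul_assoc (⅟S), hswap]
      _ = ⅟S * (⅟(K - c) * (S * T)) := by simp only [mul_assoc]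
      _ = ⅟S * (K + c) := by rw [e]
  · calc ⅟S * (K + c) = ⅟S * ((K + c) * ((K - c) * ⅟(K - c))) := by
          rw [mul_invOf_self, mul_one]
      _ = ⅟S * (S * T) * ⅟(K - c) := by
          rw [← mul_assoc (K + c), ← h1'']; simp only [mul_assoc]
      _ = T * ⅟(K - c) := by rw [← mul_assoc, invOf_mul_self, one_mul]
  · calc T * ⅟(K - c) = T * (S * ⅟S) * ⅟(K - c) := by rw [mul_invOf_self, mul_one]
      _ = (K' + c) * ((K' - c) * ⅟S) * ⅟(K - c) := by
          rw [← mul_assoc T, h2'']; simp only [mul_assoc]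
      _ = (K' + c) * ⅟S * ((K - c) * ⅟(K - c)) := by
          rw [hswap2]; simp only [mul_assoc]
      _ = (K' + c) * ⅟S := by rw [mul_invOf_self, mul_one]

/-- Under the Calderón identities, assuming `S`, `K - (1/2)•1`, and `K' - (1/2)•1`
are invertible, the four expressions for the exterior Dirichlet-to-Neumann map
`Λ₊` agree. -/
theorem exterior_DtN_formulas (A : Type*) [Ring A] [Algebra ℚ A]
    (K S K' T : A)
    (h1 : S * T = -((1/4 : ℚ) • (1 : A)) + K * K)
    (h2 : T * S = -((1/4 : ℚ) • (1 : A)) + K' * K')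
    (h3 : K * S = S * K')
    (h4 : T * K = K' * T)
    [Invertible S]
    [Invertible (K - (1/2 : ℚ) • (1 : A))]
    [Invertible (K' - (1/2 : ℚ) • (1 : A))] :
    ⅟(K' - (1/2 : ℚ) • (1 : A)) * T = ⅟S * (K + (1/2 : ℚ) • (1 : A)) ∧
    ⅟S * (K + (1/2 : ℚ) • (1 : A)) = T * ⅟(K - (1/2 : ℚ) • (1 : A)) ∧
    T * ⅟(K - (1/2 : ℚ) • (1 : A)) = (K' + (1/2 : ℚ) • (1 : A)) * ⅟S := by
  have hcomm : ∀ x : A, x * ((1/2 : ℚ) • (1 : A)) = ((1/2 : ℚ) • (1 : A)) * x := by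
    intro x; simp [mul_smul_comm, smul_mul_assoc]
  have hcc : ((1/2 : ℚ) • (1 : A)) * ((1/2 : ℚ) • (1 : A)) = (1/4 : ℚ) • (1 : A) := by
    simp only [smul_mul_assoc, mul_smul_comm, smul_smul, mul_one]
    norm_num
  exact exterior_DtN_aux A K S K' T ((1/2 : ℚ) • (1 : A))
    (by rw [h1, mul_add, sub_mul, sub_mul, hcomm K, hcc]; abel)
    (by rw [h1, add_mul, mul_sub, mul_sub, hcomm K, hcc]; abel)
    (by rw [h2, add_mul, mul_sub, mul_sub, hcomm K', hcc]; abel)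
    (by rw [sub_mul, mul_sub, h3, hcomm S])
end

section
/- Let A be a (possibly noncommutative) ring that is an algebra over ℚ, and let K, S, K', T ∈ A satisfy S*T = -(1/4)•1 + K*K, T*S = -(1/4)•1 + K'*K', K*S = S*K', and T*K = K'*T. Assume S, K + (1/2)•1, and K' + (1/2)•1 are invertible in A. Then the four elements (K' + (1/2)•1)⁻¹ * T, S⁻¹ * (K − (1/2)•1), T * (K + (1/2)•1)⁻¹, and (K' − (1/2)•1) * S⁻¹ are all equal. (This common element is the interior Dirichlet-to-Neumann map Λ₋.) -/
/-- Under the Calderón identities, assuming `S`, `K + (1/2)•1`, and `K' + (1/2)•1`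
are invertible, the four expressions for the interior Dirichlet-to-Neumann map
`Λ₋` agree. -/
theorem interior_DtN_formulas (A : Type*) [Ring A] [Algebra ℚ A]
    (K S K' T : A)
    (h1 : S * T = -((1/4 : ℚ) • (1 : A)) + K * K)
    (h2 : T * S = -((1/4 : ℚ) • (1 : A)) + K' * K')
    (h3 : K * S = S * K')
    (h4 : T * K = K' * T)
    [Invertible S]
    [Invertible (K + (1/2 : ℚ) • (1 : A))]
    [Invertible (K' + (1/2 : ℚ) • (1 : A))] :
    ⅟(K' + (1/2 : ℚ) • (1 : A)) * T = ⅟S * (K - (1/2 : ℚ) • (1 : A)) ∧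
    ⅟S * (K - (1/2 : ℚ) • (1 : A)) = T * ⅟(K + (1/2 : ℚ) • (1 : A)) ∧
    T * ⅟(K + (1/2 : ℚ) • (1 : A)) = (K' - (1/2 : ℚ) • (1 : A)) * ⅟S := by
  have h1' : S * T =
      (K - (1/2 : ℚ) • (1 : A)) * (K + (1/2 : ℚ) • (1 : A)) := by
    rw [h1, sub_mul, mul_add, mul_add]
    simp only [smul_mul_assoc, mul_smul_comm, one_mul, mul_one, smul_smul]
    norm_num
    abel
  have h2' : T * S =
      (K' - (1/2 : ℚ) • (1 : A)) * (K' + (1/2 : ℚ) • (1 : A)) := by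
    rw [h2, sub_mul, mul_add, mul_add]
    simp only [smul_mul_assoc, mul_smul_comm, one_mul, mul_one, smul_smul]
    norm_num
    abel
  have haS : (K + (1/2 : ℚ) • (1 : A)) * S = S * (K' + (1/2 : ℚ) • (1 : A)) := by
    rw [add_mul, mul_add, h3]
    simp [smul_mul_assoc, mul_smul_comm]
  have hTa : T * (K + (1/2 : ℚ) • (1 : A)) = (K' + (1/2 : ℚ) • (1 : A)) * T := by
    rw [mul_add, add_mul, h4]
    simp [smul_mul_assoc, mul_smul_comm]
  have e2 : T * ⅟(K + (1/2 : ℚ) • (1 : A)) = ⅟S * (K - (1/2 : ℚ) • (1 : A)) := by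
    have hT : T = ⅟S * ((K - (1/2 : ℚ) • (1 : A)) * (K + (1/2 : ℚ) • (1 : A))) := by
      rw [← h1', ← mul_assoc, invOf_mul_self, one_mul]
    rw [hT, mul_assoc, mul_assoc, mul_invOf_self, mul_one]
  have e1 : ⅟(K' + (1/2 : ℚ) • (1 : A)) * T = T * ⅟(K + (1/2 : ℚ) • (1 : A)) := by
    have hT : T = (K' + (1/2 : ℚ) • (1 : A)) * (T * ⅟(K + (1/2 : ℚ) • (1 : A))) := by
      rw [← mul_assoc, ← hTa, mul_assoc, mul_invOf_self, mul_one]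
    calc ⅟(K' + (1/2 : ℚ) • (1 : A)) * T
        = ⅟(K' + (1/2 : ℚ) • (1 : A)) *
          ((K' + (1/2 : ℚ) • (1 : A)) * (T * ⅟(K + (1/2 : ℚ) • (1 : A)))) := by
          rw [← hT]
      _ = T * ⅟(K + (1/2 : ℚ) • (1 : A)) := by
          rw [← mul_assoc, invOf_mul_self, one_mul]
  have key : (K' + (1/2 : ℚ) • (1 : A)) * ⅟S = ⅟S * (K + (1/2 : ℚ) • (1 : A)) := by
    have h : K' + (1/2 : ℚ) • (1 : A) = ⅟S * ((K + (1/2 : ℚ) • (1 : A)) * S) := by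
      rw [haS, ← mul_assoc, invOf_mul_self, one_mul]
    rw [h, mul_assoc, mul_assoc, mul_invOf_self, mul_one]
  have e3 : T * ⅟(K + (1/2 : ℚ) • (1 : A)) = (K' - (1/2 : ℚ) • (1 : A)) * ⅟S := by
    have hT : T = (K' - (1/2 : ℚ) • (1 : A)) * (K' + (1/2 : ℚ) • (1 : A)) * ⅟S := by
      rw [← h2', mul_assoc, mul_invOf_self, mul_one]
    rw [hT, mul_assoc (K' - (1/2 : ℚ) • (1 : A)), key, ← mul_assoc,
      mul_assoc ((K' - (1/2 : ℚ) • (1 : A)) * ⅟S), mul_invOf_self, mul_one]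
  exact ⟨e1.trans e2, e2.symm, e3⟩
end
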